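/- Let f : [0,1]^n → [0,1] be continuous and such that both f and 1−f are polynomially bounded. Then there exists an integer t such that, defining g(p) := P_p[f(X̄_t) ≥ 1/2] and f̃(p) := (4/3)·(f(p) − (1/4)·g(p)), the function f̃ maps [0,1]^n into [0,1], is continuous, and both f̃ and 1−f̃ are polynomially bounded. -/
import Mathlib


open Finset

def cube (n : ℕ) : Set (Fin n → ℝ) := {p | ∀ i, 0 ≤ p i ∧ p i ≤ 1}

/-- The open face `F_{A,S,B}` of the hypercube, where `S` is the complement of `A ∪ B`. -/
def face {n : ℕ} (A B : Finset (Fin n)) : Set (Fin n → ℝ) :=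
  {p | (∀ i ∈ A, p i = 0) ∧ (∀ i ∈ B, p i = 1) ∧ ∀ i ∉ A ∪ B, 0 < p i ∧ p i < 1}

/-- `(1-p)^A · (p(1-p))^S · p^B` for the face `F_{A,S,B}`. -/
noncomputable def facePoly {n : ℕ} (A B : Finset (Fin n)) (p : Fin n → ℝ) : ℝ :=
  (∏ i ∈ A, (1 - p i)) * (∏ i ∈ (A ∪ B)ᶜ, p i * (1 - p i)) * (∏ i ∈ B, p i)
/-- A function `f : [0,1]^n → [0,1]` is polynomially bounded. -/
def PolyBounded {n : ℕ} (f : (Fin n → ℝ) → ℝ) : Prop :=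
  ∃ (m : ℕ) (c : ℝ), 0 < c ∧ ∀ A B : Finset (Fin n), Disjoint A B →
    (¬ ∀ q ∈ face A B, f q = 0) →
    ∀ p ∈ cube n, c * facePoly A B p ^ m ≤ f p
/-- Probability weight of a realization `x` of `t` flips of the `n` coins `p`. -/
noncomputable def flipWeight {n t : ℕ} (p : Fin n → ℝ) (x : Fin t → Fin n → Bool) : ℝ :=
  ∏ s, ∏ i, if x s i then p i else 1 - p i

/-- `P_p[E]`, the probability of the event `E` for `t` i.i.d. flips of the `n` coins `p`. -/
noncomputable def coinProb {n : ℕ} (t : ℕ) (p : Fin n → ℝ)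
    (E : Set (Fin t → Fin n → Bool)) : ℝ :=
  ∑ x : Fin t → Fin n → Bool, Set.indicator E (flipWeight p) x

/-- The empirical average `X̄_t` of the coin flips `x`. -/
noncomputable def empAvg {n : ℕ} (t : ℕ) (x : Fin t → Fin n → Bool) : Fin n → ℝ :=
  fun i => (∑ s, if x s i then (1 : ℝ) else 0) / t

----------------------------------------------------------------

lemma sum_fn_prod {ι κ : Type*} [Fintype ι] [DecidableEq ι] [Fintype κ] (f : ι → κ → ℝ) :
    ∑ z : ι → κ, ∏ i, f i (z i) = ∏ i, ∑ y, f i y := by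
  rw [Finset.prod_univ_sum, ← Fintype.piFinset_univ]

noncomputable def oneWt (t : ℕ) (a : ℝ) (y : Fin t → Bool) : ℝ :=
  ∏ s, if y s then a else 1 - a

noncomputable def oneProb (t : ℕ) (a : ℝ) (T : Set (Fin t → Bool)) : ℝ :=
  ∑ y, Set.indicator T (oneWt t a) y

noncomputable def cnt {t : ℕ} (y : Fin t → Bool) : ℝ := ∑ s, if y s then (1:ℝ) else 0

def col {n t : ℕ} (x : Fin t → Fin n → Bool) (i : Fin n) : Fin t → Bool := fun s => x s i

lemma empAvg_eq {n t : ℕ} (x : Fin t → Fin n → Bool) (i : Fin n) :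
    empAvg t x i = cnt (col x i) / t := rfl

lemma oneWt_nonneg {t : ℕ} {a : ℝ} (h0 : 0 ≤ a) (h1 : a ≤ 1) (y : Fin t → Bool) :
    0 ≤ oneWt t a y := by
  apply Finset.prod_nonneg; intro s _; split <;> linarith

lemma flipWeight_eq_prod {n t : ℕ} (p : Fin n → ℝ) (x : Fin t → Fin n → Bool) :
    flipWeight p x = ∏ i, oneWt t (p i) (col x i) := by
  rw [flipWeight, Finset.prod_comm]; rfl

lemma flipWeight_nonneg {n t : ℕ} {p : Fin n → ℝ} (hp : p ∈ cube n)
    (x : Fin t → Fin n → Bool) : 0 ≤ flipWeight p x := by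
  rw [flipWeight_eq_prod]
  exact Finset.prod_nonneg fun i _ => oneWt_nonneg (hp i).1 (hp i).2 _

open Classical in
lemma coinProb_cone {n t : ℕ} (p : Fin n → ℝ) (T : Fin n → Set (Fin t → Bool)) :
    coinProb t p {x | ∀ i, col x i ∈ T i} = ∏ i, oneProb t (p i) (T i) := by
  unfold coinProb oneProb
  have key : ∀ x : Fin t → Fin n → Bool,
      Set.indicator {x | ∀ i, col x i ∈ T i} (flipWeight p) x
        = ∏ i, Set.indicator (T i) (oneWt t (p i)) (col x i) := by
    intro x
    by_cases hx : x ∈ {x | ∀ i, col x i ∈ T i}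
    · rw [Set.indicator_of_mem hx, flipWeight_eq_prod]
      exact Finset.prod_congr rfl fun i _ => (Set.indicator_of_mem (hx i) _).symm
    · rw [Set.indicator_of_notMem hx]
      obtain ⟨i, hi⟩ := not_forall.mp hx
      exact (Finset.prod_eq_zero (Finset.mem_univ i)
        (by rw [Set.indicator_of_notMem hi])).symm
  simp_rw [key]
  rw [← sum_fn_prod (fun i y => Set.indicator (T i) (oneWt t (p i)) y)]
  exact Fintype.sum_equiv (Equiv.piComm (fun _ _ => Bool)).symm _ _ (fun x => rfl)

lemma oneProb_nonneg {t : ℕ} {a : ℝ} (h0 : 0 ≤ a) (h1 : a ≤ 1) (T : Set (Fin t → Bool)) :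
    0 ≤ oneProb t a T :=
  Finset.sum_nonneg fun y _ => Set.indicator_nonneg (fun z _ => oneWt_nonneg h0 h1 z) y

lemma oneProb_mono {t : ℕ} {a : ℝ} (h0 : 0 ≤ a) (h1 : a ≤ 1) {T T' : Set (Fin t → Bool)}
    (hTT : T ⊆ T') : oneProb t a T ≤ oneProb t a T' := by
  apply Finset.sum_le_sum
  intro y _
  classical
  by_cases hy : y ∈ T
  · rw [Set.indicator_of_mem hy, Set.indicator_of_mem (hTT hy)]
  · rw [Set.indicator_of_notMem hy]
    exact Set.indicator_nonneg (fun z _ => oneWt_nonneg h0 h1 z) y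

lemma sum_oneWt {t : ℕ} {a : ℝ} : ∑ y : Fin t → Bool, oneWt t a y = 1 := by
  unfold oneWt
  rw [sum_fn_prod (fun (_ : Fin t) (b : Bool) => if b then a else 1 - a)]
  rw [Finset.prod_eq_one]
  intro s _
  rw [Fintype.sum_bool]
  simp

lemma oneProb_le_one {t : ℕ} {a : ℝ} (h0 : 0 ≤ a) (h1 : a ≤ 1) (T : Set (Fin t → Bool)) :
    oneProb t a T ≤ 1 := by
  rw [← sum_oneWt (t := t) (a := a)]
  apply Finset.sum_le_sum
  intro y _
  exact Set.indicator_le_self' (fun z _ => oneWt_nonneg h0 h1 z) y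

lemma cnt_eq_card {t : ℕ} (y : Fin t → Bool) :
    cnt y = (Finset.univ.filter (fun s => y s = true)).card := by
  rw [cnt, Finset.card_filter]
  push_cast
  apply Finset.sum_congr rfl
  intro s _
  by_cases h : y s <;> simp [h]

lemma cnt_nonneg {t : ℕ} (y : Fin t → Bool) : 0 ≤ cnt y := by
  apply Finset.sum_nonneg; intro s _; split <;> norm_num

lemma cnt_le {t : ℕ} (y : Fin t → Bool) : cnt y ≤ t := by
  calc cnt y ≤ ∑ s : Fin t, 1 := Finset.sum_le_sum (fun s _ => by split <;> norm_num)
  _ = t := by simp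

/-- weight bound: if at least k trues, weight ≤ a^k -/
lemma oneWt_le_pow {t : ℕ} {a : ℝ} (h0 : 0 ≤ a) (h1 : a ≤ 1) (k : ℕ) (y : Fin t → Bool)
    (hy : (k : ℝ) ≤ cnt y) : oneWt t a y ≤ a ^ k := by
  classical
  have hcard : k ≤ (Finset.univ.filter (fun s => y s = true)).card := by
    have := hy; rw [cnt_eq_card] at this; exact_mod_cast this
  calc oneWt t a y = (∏ s ∈ Finset.univ.filter (fun s => y s = true), if y s then a else 1 - a)
        * ∏ s ∈ Finset.univ.filter (fun s => ¬ y s = true), if y s then a else 1 - a := by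
        rw [oneWt, ← Finset.prod_filter_mul_prod_filter_not Finset.univ (fun s => y s = true)]
    _ ≤ a ^ (Finset.univ.filter (fun s => y s = true)).card * 1 := by
        apply mul_le_mul
        · rw [← Finset.prod_const]
          apply Finset.prod_le_prod
          · intro s hs; rw [Finset.mem_filter] at hs; rw [if_pos hs.2]; exact h0
          · intro s hs; rw [Finset.mem_filter] at hs; rw [if_pos hs.2]
        · apply Finset.prod_le_one
          · intro s hs; rw [Finset.mem_filter] at hs; rw [if_neg hs.2]; linarith
          · intro s hs; rw [Finset.mem_filter] at hs; rw [if_neg hs.2]; linarith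
        · apply Finset.prod_nonneg
          intro s hs; rw [Finset.mem_filter] at hs; rw [if_neg hs.2]; linarith
        · exact pow_nonneg h0 _
    _ = a ^ (Finset.univ.filter (fun s => y s = true)).card := mul_one _
    _ ≤ a ^ k := pow_le_pow_of_le_one h0 h1 hcard

lemma oneWt_le_pow' {t : ℕ} {a : ℝ} (h0 : 0 ≤ a) (h1 : a ≤ 1) (k : ℕ) (y : Fin t → Bool)
    (hy : (k : ℝ) ≤ t - cnt y) : oneWt t a y ≤ (1 - a) ^ k := by
  classical
  have key : oneWt t a y = oneWt t (1 - a) (fun s => ! y s) := by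
    unfold oneWt
    apply Finset.prod_congr rfl
    intro s _
    by_cases h : y s <;> simp [h]
  rw [key]
  apply oneWt_le_pow (by linarith) (by linarith)
  have : cnt (fun s => ! y s) = t - cnt y := by
    unfold cnt
    have : ∀ s : Fin t, (if (! y s) = true then (1:ℝ) else 0) = 1 - (if y s then (1:ℝ) else 0) := by
      intro s; by_cases h : y s <;> simp [h]
    simp_rw [this]
    rw [Finset.sum_sub_distrib]
    simp [cnt]
  rw [this]; exact hy

lemma card_fun_bool (t : ℕ) : (Finset.univ : Finset (Fin t → Bool)).card = 2 ^ t := by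
  classical
  rw [Finset.card_univ, Fintype.card_fun]
  simp

lemma oneProb_tail_low {t : ℕ} {a : ℝ} (h0 : 0 ≤ a) (h1 : a ≤ 1) (k : ℕ) :
    oneProb t a {y | (k:ℝ) ≤ cnt y} ≤ 2 ^ t * a ^ k := by
  classical
  calc oneProb t a {y | (k:ℝ) ≤ cnt y} ≤ ∑ y : Fin t → Bool, a ^ k := by
        apply Finset.sum_le_sum
        intro y _
        by_cases hy : y ∈ {y : Fin t → Bool | (k:ℝ) ≤ cnt y}
        · rw [Set.indicator_of_mem hy]; exact oneWt_le_pow h0 h1 k y hy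
        · rw [Set.indicator_of_notMem hy]; exact pow_nonneg h0 _
    _ = 2 ^ t * a ^ k := by rw [Finset.sum_const, card_fun_bool]; push_cast; ring

lemma oneProb_tail_high {t : ℕ} {a : ℝ} (h0 : 0 ≤ a) (h1 : a ≤ 1) (k : ℕ) :
    oneProb t a {y | (k:ℝ) ≤ t - cnt y} ≤ 2 ^ t * (1 - a) ^ k := by
  classical
  calc oneProb t a {y | (k:ℝ) ≤ t - cnt y} ≤ ∑ y : Fin t → Bool, (1-a) ^ k := by
        apply Finset.sum_le_sum
        intro y _
        by_cases hy : y ∈ {y : Fin t → Bool | (k:ℝ) ≤ t - cnt y}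
        · rw [Set.indicator_of_mem hy]; exact oneWt_le_pow' h0 h1 k y hy
        · rw [Set.indicator_of_notMem hy]; exact pow_nonneg (by linarith) _
    _ = 2 ^ t * (1-a) ^ k := by rw [Finset.sum_const, card_fun_bool]; push_cast; ring

noncomputable def chi {t : ℕ} (s : Fin t) (y : Fin t → Bool) : ℝ := if y s then 1 else 0

lemma sum_oneWt_chi2 {t : ℕ} {a : ℝ} (s s' : Fin t) :
    ∑ y : Fin t → Bool, oneWt t a y * chi s y * chi s' y = if s = s' then a else a ^ 2 := by
  classical
  have key : ∀ y : Fin t → Bool, oneWt t a y * chi s y * chi s' y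
      = ∏ u, ((if y u then a else 1 - a) * (if u = s then (if y u then (1:ℝ) else 0) else 1)
          * (if u = s' then (if y u then (1:ℝ) else 0) else 1)) := by
    intro y
    rw [Finset.prod_mul_distrib, Finset.prod_mul_distrib,
        Finset.prod_ite_eq' Finset.univ s (fun u => if y u then (1:ℝ) else 0),
        Finset.prod_ite_eq' Finset.univ s' (fun u => if y u then (1:ℝ) else 0)]
    simp [oneWt, chi]
  simp_rw [key]
  rw [sum_fn_prod (fun (u : Fin t) (b : Bool) => (if b then a else 1 - a)
      * (if u = s then (if b then (1:ℝ) else 0) else 1)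
      * (if u = s' then (if b then (1:ℝ) else 0) else 1))]
  have inner : ∀ u : Fin t, (∑ b : Bool, (if b then a else 1 - a)
      * (if u = s then (if b then (1:ℝ) else 0) else 1)
      * (if u = s' then (if b then (1:ℝ) else 0) else 1))
      = if u = s ∨ u = s' then a else 1 := by
    intro u
    rw [Fintype.sum_bool]
    by_cases h1 : u = s <;> by_cases h2 : u = s' <;> simp [h1, h2] <;> ring
  simp_rw [inner]
  by_cases hss : s = s'
  · subst hss
    simp_rw [or_self]
    rw [Finset.prod_ite_eq' Finset.univ s (fun _ => a)]
    simp
  · have : ∀ u : Fin t, (if u = s ∨ u = s' then a else 1)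
        = if u ∈ ({s, s'} : Finset (Fin t)) then a else 1 := by
      intro u; simp [Finset.mem_insert, Finset.mem_singleton]
    simp_rw [this]
    rw [Finset.prod_ite_mem Finset.univ ({s, s'} : Finset (Fin t)) (fun _ => a)]
    rw [Finset.univ_inter, Finset.prod_const]
    rw [Finset.card_insert_of_notMem (by simp [hss]), Finset.card_singleton]
    simp [hss]

lemma sum_oneWt_chi {t : ℕ} {a : ℝ} (h0 : 0 ≤ a) (h1 : a ≤ 1) (s : Fin t) :
    ∑ y : Fin t → Bool, oneWt t a y * chi s y = a := by
  calc ∑ y : Fin t → Bool, oneWt t a y * chi s y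
      = ∑ y : Fin t → Bool, oneWt t a y * chi s y * chi s y :=
        Finset.sum_congr rfl (fun y _ => by unfold chi; split <;> ring)
    _ = a := by rw [sum_oneWt_chi2 s s, if_pos rfl]

lemma sum_oneWt_cnt {t : ℕ} {a : ℝ} (h0 : 0 ≤ a) (h1 : a ≤ 1) :
    ∑ y : Fin t → Bool, oneWt t a y * cnt y = t * a := by
  have : ∀ y : Fin t → Bool, oneWt t a y * cnt y = ∑ s, oneWt t a y * chi s y := by
    intro y; rw [← Finset.mul_sum]; rfl
  simp_rw [this]
  rw [Finset.sum_comm]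
  simp_rw [sum_oneWt_chi h0 h1]
  simp [mul_comm]

lemma sum_oneWt_cnt_sq {t : ℕ} {a : ℝ} (h0 : 0 ≤ a) (h1 : a ≤ 1) :
    ∑ y : Fin t → Bool, oneWt t a y * (cnt y) ^ 2 = t * a + (t^2 - t) * a ^ 2 := by
  classical
  have expand : ∀ y : Fin t → Bool, oneWt t a y * (cnt y) ^ 2
      = ∑ s, ∑ s', oneWt t a y * chi s y * chi s' y := by
    intro y
    have : (cnt y) ^ 2 = ∑ s, ∑ s', chi s y * chi s' y := by
      rw [← Finset.sum_mul_sum]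
      rw [sq]; rfl
    rw [this, Finset.mul_sum]
    apply Finset.sum_congr rfl
    intro s _
    rw [Finset.mul_sum]
    apply Finset.sum_congr rfl
    intro s' _
    ring
  simp_rw [expand]
  rw [Finset.sum_comm]
  have swap2 : ∀ s : Fin t, ∑ y : Fin t → Bool, ∑ s', oneWt t a y * chi s y * chi s' y
      = ∑ s', ∑ y : Fin t → Bool, oneWt t a y * chi s y * chi s' y := fun s => by rw [Finset.sum_comm]
  simp_rw [swap2, sum_oneWt_chi2]
  have inner : ∀ s : Fin t, (∑ s' : Fin t, if s = s' then a else a ^ 2)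
      = t * a ^ 2 + (a - a ^ 2) := by
    intro s
    have : ∀ s' : Fin t, (if s = s' then a else a ^ 2)
        = a ^ 2 + (if s = s' then a - a ^ 2 else 0) := by
      intro s'; split <;> ring
    simp_rw [this]
    rw [Finset.sum_add_distrib, Finset.sum_const, Finset.sum_ite_eq Finset.univ s (fun _ => a - a^2)]
    simp [mul_comm]
  simp_rw [inner]
  rw [Finset.sum_const]
  simp only [Finset.card_univ, Fintype.card_fin, nsmul_eq_mul]
  ring

lemma sum_oneWt_var {t : ℕ} {a : ℝ} (h0 : 0 ≤ a) (h1 : a ≤ 1) :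
    ∑ y : Fin t → Bool, oneWt t a y * (cnt y - t * a) ^ 2 = t * a * (1 - a) := by
  have expand : ∀ y : Fin t → Bool, oneWt t a y * (cnt y - t * a) ^ 2
      = oneWt t a y * (cnt y)^2 - (2 * t * a) * (oneWt t a y * cnt y)
        + (t * a)^2 * oneWt t a y := by
    intro y; ring
  simp_rw [expand]
  rw [Finset.sum_add_distrib, Finset.sum_sub_distrib, ← Finset.mul_sum, ← Finset.mul_sum]
  rw [sum_oneWt_cnt_sq h0 h1, sum_oneWt_cnt h0 h1, sum_oneWt]
  ring

lemma oneProb_cheb {t : ℕ} {a δ : ℝ} (h0 : 0 ≤ a) (h1 : a ≤ 1) (hδ : 0 < δ) (ht : 0 < t) :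
    oneProb t a {y | δ ≤ |cnt y / t - a|} ≤ a * (1 - a) / (t * δ ^ 2) := by
  classical
  have htR : (0:ℝ) < t := by exact_mod_cast ht
  have key : ∀ y : Fin t → Bool, Set.indicator {y : Fin t → Bool | δ ≤ |cnt y / t - a|}
      (oneWt t a) y ≤ oneWt t a y * (cnt y - t * a) ^ 2 / (t * δ) ^ 2 := by
    intro y
    by_cases hy : y ∈ {y : Fin t → Bool | δ ≤ |cnt y / t - a|}
    · rw [Set.indicator_of_mem hy]
      have hsq : (t * δ) ^ 2 ≤ (cnt y - t * a) ^ 2 := by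
        have h2 : t * δ ≤ |cnt y - t * a| := by
          have := hy
          simp only [Set.mem_setOf_eq] at this
          have : t * δ ≤ t * |cnt y / t - a| := by
            apply mul_le_mul_of_nonneg_left this (le_of_lt htR)
          calc (t:ℝ) * δ ≤ t * |cnt y / t - a| := this
            _ = |t * (cnt y / t - a)| := by
                rw [abs_mul, abs_of_pos htR]
            _ = |cnt y - t * a| := by
                congr 1
                field_simp
        calc (t * δ) ^ 2 ≤ |cnt y - t * a| ^ 2 := by
              apply pow_le_pow_left₀ (by positivity) h2
          _ = (cnt y - t * a) ^ 2 := sq_abs _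
      rw [le_div_iff₀ (by positivity)]
      calc oneWt t a y * (t * δ)^2 ≤ oneWt t a y * (cnt y - t * a)^2 :=
            mul_le_mul_of_nonneg_left hsq (oneWt_nonneg h0 h1 y)
        _ = _ := by ring
    · rw [Set.indicator_of_notMem hy]
      exact div_nonneg (mul_nonneg (oneWt_nonneg h0 h1 y) (sq_nonneg _)) (sq_nonneg _)
  calc oneProb t a {y | δ ≤ |cnt y / t - a|}
      ≤ ∑ y : Fin t → Bool, oneWt t a y * (cnt y - t * a) ^ 2 / (t * δ) ^ 2 :=
        Finset.sum_le_sum (fun y _ => key y)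
    _ = (∑ y : Fin t → Bool, oneWt t a y * (cnt y - t * a) ^ 2) / (t * δ) ^ 2 := by
        rw [Finset.sum_div]
    _ = t * a * (1 - a) / (t * δ) ^ 2 := by rw [sum_oneWt_var h0 h1]
    _ = a * (1 - a) / (t * δ ^ 2) * (t / t) := by ring
    _ = a * (1 - a) / (t * δ ^ 2) := by rw [div_self (ne_of_gt htR), mul_one]

lemma coinProb_nonneg {n t : ℕ} {p : Fin n → ℝ} (hp : p ∈ cube n)
    (E : Set (Fin t → Fin n → Bool)) : 0 ≤ coinProb t p E :=
  Finset.sum_nonneg fun x _ => Set.indicator_nonneg (fun z _ => flipWeight_nonneg hp z) x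

lemma coinProb_mono {n t : ℕ} {p : Fin n → ℝ} (hp : p ∈ cube n)
    {E F : Set (Fin t → Fin n → Bool)} (hEF : E ⊆ F) : coinProb t p E ≤ coinProb t p F := by
  apply Finset.sum_le_sum
  intro x _
  classical
  by_cases hx : x ∈ E
  · rw [Set.indicator_of_mem hx, Set.indicator_of_mem (hEF hx)]
  · rw [Set.indicator_of_notMem hx]
    exact Set.indicator_nonneg (fun z _ => flipWeight_nonneg hp z) x

lemma coinProb_univ {n t : ℕ} {p : Fin n → ℝ} (hp : p ∈ cube n) :
    coinProb t p (Set.univ) = 1 := by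
  have : (Set.univ : Set (Fin t → Fin n → Bool)) = {x | ∀ i, col x i ∈ (Set.univ : Set (Fin t → Bool))} := by
    ext x; simp
  rw [this, coinProb_cone]
  rw [Finset.prod_eq_one]
  intro i _
  have : (Set.univ : Set (Fin t → Bool)).indicator (oneWt t (p i)) = oneWt t (p i) := by
    simp
  rw [oneProb, this, sum_oneWt]

lemma coinProb_le_one {n t : ℕ} {p : Fin n → ℝ} (hp : p ∈ cube n)
    (E : Set (Fin t → Fin n → Bool)) : coinProb t p E ≤ 1 := by
  rw [← coinProb_univ (t := t) hp]
  exact coinProb_mono hp (Set.subset_univ E)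

lemma coinProb_compl {n t : ℕ} {p : Fin n → ℝ} (hp : p ∈ cube n)
    (E : Set (Fin t → Fin n → Bool)) : coinProb t p Eᶜ = 1 - coinProb t p E := by
  classical
  rw [← coinProb_univ (t := t) hp, eq_sub_iff_add_eq, coinProb, coinProb, coinProb,
      ← Finset.sum_add_distrib]
  apply Finset.sum_congr rfl
  intro x _
  by_cases hx : x ∈ E
  · rw [Set.indicator_of_mem hx, Set.indicator_of_notMem (by simp [hx]),
        Set.indicator_of_mem (Set.mem_univ x)]
    ring
  · rw [Set.indicator_of_notMem hx, Set.indicator_of_mem (by simp [hx]),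
        Set.indicator_of_mem (Set.mem_univ x)]
    ring

lemma coinProb_continuous {n t : ℕ} (E : Set (Fin t → Fin n → Bool)) :
    Continuous (fun p : Fin n → ℝ => coinProb t p E) := by
  classical
  unfold coinProb
  apply continuous_finset_sum
  intro x _
  have : (fun p : Fin n → ℝ => Set.indicator E (flipWeight p) x)
      = fun p => (if x ∈ E then (1:ℝ) else 0) * flipWeight p x := by
    funext p
    by_cases hx : x ∈ E
    · rw [Set.indicator_of_mem hx, if_pos hx, one_mul]
    · rw [Set.indicator_of_notMem hx, if_neg hx, zero_mul]
  rw [this]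
  apply Continuous.mul continuous_const
  unfold flipWeight
  apply continuous_finset_prod
  intro s _
  apply continuous_finset_prod
  intro i _
  by_cases h : x s i <;> simp [h] <;> continuity

lemma empAvg_mem_cube {n t : ℕ} (x : Fin t → Fin n → Bool) : empAvg t x ∈ cube n := by
  intro i
  rw [empAvg_eq]
  rcases Nat.eq_zero_or_pos t with ht | ht
  · subst ht
    simp [cnt]
  · have htR : (0:ℝ) < t := by exact_mod_cast ht
    constructor
    · exact div_nonneg (cnt_nonneg _) (le_of_lt htR)
    · rw [div_le_one htR]; exact cnt_le _

lemma face_subset_cube {n : ℕ} (A B : Finset (Fin n)) : face A B ⊆ cube n := by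
  intro q hq i
  classical
  obtain ⟨h1, h2, h3⟩ := hq
  by_cases hA : i ∈ A
  · rw [h1 i hA]; norm_num
  · by_cases hB : i ∈ B
    · rw [h2 i hB]; norm_num
    · have := h3 i (by simp [hA, hB])
      constructor <;> linarith [this.1, this.2]

/-- If `h` vanishes on the open face and is uniformly continuous, it is small near the
closed face. -/
lemma vanish_near_face {n : ℕ} (h : (Fin n → ℝ) → ℝ) {A B : Finset (Fin n)}
    (hAB : Disjoint A B) (hfz : ∀ q ∈ face A B, h q = 0)
    {δ δ' : ℝ} (hδ0 : 0 < δ) (hδ8 : δ ≤ 1/8) (hδδ' : δ < δ')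
    (hmod : ∀ p ∈ cube n, ∀ q ∈ cube n, dist q p < δ' → |h q - h p| < 1/7)
    {q : Fin n → ℝ} (hq : q ∈ cube n)
    (hqA : ∀ i ∈ A, q i ≤ δ) (hqB : ∀ i ∈ B, 1 - δ ≤ q i) : h q < 1/2 := by
  classical
  set q' : Fin n → ℝ := fun i => if i ∈ A then 0 else if i ∈ B then 1
    else max δ (min (1-δ) (q i)) with hq'def
  have hq'face : q' ∈ face A B := by
    refine ⟨fun i hi => by simp [hq'def, hi], fun i hi => ?_, fun i hi => ?_⟩
    · have hiA : i ∉ A := Finset.disjoint_right.mp hAB hi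
      simp [hq'def, hiA, hi]
    · rw [Finset.mem_union] at hi
      push_neg at hi
      have e : q' i = max δ (min (1-δ) (q i)) := by simp [hq'def, hi.1, hi.2]
      rw [e]
      constructor
      · exact lt_of_lt_of_le hδ0 (le_max_left _ _)
      · rw [max_lt_iff]
        constructor
        · linarith
        · exact lt_of_le_of_lt (min_le_left _ _) (by linarith)
  have hq'cube : q' ∈ cube n := face_subset_cube A B hq'face
  have hdist : dist q q' < δ' := by
    have hle : dist q q' ≤ δ := by
      rw [dist_pi_le_iff (le_of_lt hδ0)]
      intro i
      rw [Real.dist_eq]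
      rw [abs_le]
      by_cases hiA : i ∈ A
      · have : q' i = 0 := by simp [hq'def, hiA]
        rw [this]
        constructor
        · linarith [(hq i).1]
        · linarith [hqA i hiA]
      · by_cases hiB : i ∈ B
        · have : q' i = 1 := by simp [hq'def, hiA, hiB]
          rw [this]
          constructor
          · linarith [hqB i hiB]
          · linarith [(hq i).2]
        · have e : q' i = max δ (min (1-δ) (q i)) := by simp [hq'def, hiA, hiB]
          rw [e]
          have h0 := (hq i).1
          have h1 := (hq i).2
          constructor
          · have l2 : max δ (min (1-δ) (q i)) ≤ max δ (q i) := by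
              apply max_le_max le_rfl (min_le_right _ _)
            have l3 : max δ (q i) ≤ q i + δ := by
              rw [max_le_iff]; constructor <;> linarith
            linarith
          · have l1 : q i - δ ≤ min (1-δ) (q i) := by
              rw [le_min_iff]; constructor <;> linarith
            linarith [le_trans l1 (le_max_right δ (min (1-δ) (q i)))]
    linarith
  have := hmod q' hq'cube q hq hdist
  rw [hfz q' hq'face] at this
  rw [abs_lt] at this
  linarith [this.2]

/-- Lower bound for `facePoly` at `p` for subpairs of the small/large coordinate sets. -/
lemma facePoly_lower {n : ℕ} {p : Fin n → ℝ} (hp : p ∈ cube n) {θ : ℝ}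
    (hθ0 : 0 < θ) (hθ : θ ≤ 1/8) {Ap Bp A B : Finset (Fin n)}
    (hAp : ∀ i, i ∈ Ap ↔ p i ≤ θ) (hBp : ∀ i, i ∈ Bp ↔ 1 - θ ≤ p i)
    (hA : A ⊆ Ap) (hB : B ⊆ Bp) :
    (θ*(1-θ))^n * ((∏ i ∈ Ap \ A, p i) * (∏ i ∈ Bp \ B, (1 - p i)))
      ≤ facePoly A B p := by
  classical
  set lam := θ * (1 - θ) with hlam
  have hlampos : 0 < lam := by rw [hlam]; nlinarith
  have hlamle : lam ≤ 1 := by rw [hlam]; nlinarith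
  have hApBp : Disjoint Ap Bp := by
    rw [Finset.disjoint_left]
    intro i hiA hiB
    rw [hAp] at hiA; rw [hBp] at hiB
    linarith
  have hABd : Disjoint A B :=
    Finset.disjoint_of_subset_left hA (Finset.disjoint_of_subset_right hB hApBp)
  set S := (A ∪ B)ᶜ with hS
  set U := (Ap \ A) ∪ (Bp \ B) with hU
  have hUdisj : Disjoint (Ap \ A) (Bp \ B) :=
    Finset.disjoint_of_subset_left (Finset.sdiff_subset)
      (Finset.disjoint_of_subset_right (Finset.sdiff_subset) hApBp)
  have hUS : U ⊆ S := by
    intro i hi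
    rw [hU, Finset.mem_union] at hi
    rw [hS, Finset.mem_compl, Finset.mem_union]
    push_neg
    rcases hi with hi | hi
    · rw [Finset.mem_sdiff] at hi
      refine ⟨hi.2, fun hiB => ?_⟩
      have h1 := (hAp i).mp hi.1
      have h2 := (hBp i).mp (hB hiB)
      linarith
    · rw [Finset.mem_sdiff] at hi
      refine ⟨fun hiA => ?_, hi.2⟩
      have h1 := (hBp i).mp hi.1
      have h2 := (hAp i).mp (hA hiA)
      linarith
  set PA := ∏ i ∈ Ap \ A, p i with hPA
  set PB := ∏ i ∈ Bp \ B, (1 - p i) with hPB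
  have hPAnn : 0 ≤ PA := Finset.prod_nonneg (fun i _ => (hp i).1)
  have hPBnn : 0 ≤ PB := Finset.prod_nonneg (fun i _ => by linarith [(hp i).2])
  have hfnn : ∀ (T : Finset (Fin n)), 0 ≤ ∏ i ∈ T, p i * (1 - p i) :=
    fun T => Finset.prod_nonneg (fun i _ => mul_nonneg (hp i).1 (by linarith [(hp i).2]))
  -- individual bounds
  have bA : lam ^ A.card ≤ ∏ i ∈ A, (1 - p i) := by
    rw [← Finset.prod_const]
    apply Finset.prod_le_prod (fun i _ => le_of_lt hlampos)
    intro i hi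
    have := (hAp i).mp (hA hi)
    rw [hlam]; nlinarith
  have bB : lam ^ B.card ≤ ∏ i ∈ B, p i := by
    rw [← Finset.prod_const]
    apply Finset.prod_le_prod (fun i _ => le_of_lt hlampos)
    intro i hi
    have := (hBp i).mp (hB hi)
    rw [hlam]; nlinarith
  have bSU : lam ^ (S \ U).card ≤ ∏ i ∈ S \ U, p i * (1 - p i) := by
    rw [← Finset.prod_const]
    apply Finset.prod_le_prod (fun i _ => le_of_lt hlampos)
    intro i hi
    rw [Finset.mem_sdiff] at hi
    have hiS := hi.1
    have hiU := hi.2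
    rw [hS, Finset.mem_compl, Finset.mem_union] at hiS
    push_neg at hiS
    rw [hU, Finset.mem_union, Finset.mem_sdiff, Finset.mem_sdiff] at hiU
    push_neg at hiU
    have h1 : θ < p i := by
      by_contra hc
      push_neg at hc
      exact hiS.1 (hiU.1 ((hAp i).mpr hc))
    have h2 : p i < 1 - θ := by
      by_contra hc
      push_neg at hc
      exact hiS.2 (hiU.2 ((hBp i).mpr hc))
    rw [hlam]; nlinarith
  have bUA : lam ^ (Ap \ A).card * PA ≤ ∏ i ∈ Ap \ A, p i * (1 - p i) := by
    rw [← Finset.prod_const, hPA, ← Finset.prod_mul_distrib]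
    apply Finset.prod_le_prod
    · intro i _; exact mul_nonneg (le_of_lt hlampos) (hp i).1
    · intro i hi
      rw [Finset.mem_sdiff] at hi
      have := (hAp i).mp hi.1
      have hpi := (hp i).1
      have hx : θ*(1-θ) ≤ 1 - p i := by nlinarith
      have := mul_le_mul_of_nonneg_left hx hpi
      rw [hlam]; nlinarith
  have bUB : lam ^ (Bp \ B).card * PB ≤ ∏ i ∈ Bp \ B, p i * (1 - p i) := by
    rw [← Finset.prod_const, hPB, ← Finset.prod_mul_distrib]
    apply Finset.prod_le_prod
    · intro i _; exact mul_nonneg (le_of_lt hlampos) (by linarith [(hp i).2])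
    · intro i hi
      rw [Finset.mem_sdiff] at hi
      have := (hBp i).mp hi.1
      have hpi2 := (hp i).2
      have hx : θ*(1-θ) ≤ p i := by nlinarith
      have := mul_le_mul_of_nonneg_left hx (by linarith : (0:ℝ) ≤ 1 - p i)
      rw [hlam]; nlinarith
  have bU : (lam ^ (Ap \ A).card * PA) * (lam ^ (Bp \ B).card * PB)
      ≤ ∏ i ∈ U, p i * (1 - p i) := by
    rw [hU, Finset.prod_union hUdisj]
    apply mul_le_mul bUA bUB
      (mul_nonneg (le_of_lt (pow_pos hlampos _)) hPBnn) (hfnn _)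
  have bS : lam ^ (S \ U).card * ((lam ^ (Ap \ A).card * PA) * (lam ^ (Bp \ B).card * PB))
      ≤ ∏ i ∈ S, p i * (1 - p i) := by
    rw [← Finset.prod_sdiff hUS]
    apply mul_le_mul bSU bU
      (mul_nonneg (mul_nonneg (le_of_lt (pow_pos hlampos _)) hPAnn)
        (mul_nonneg (le_of_lt (pow_pos hlampos _)) hPBnn))
      (hfnn _)
  -- assemble
  have bfinal : (lam ^ A.card * (lam ^ (S \ U).card * ((lam ^ (Ap \ A).card * PA)
      * (lam ^ (Bp \ B).card * PB)))) * (lam ^ B.card) ≤ facePoly A B p := by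
    rw [facePoly]
    apply mul_le_mul _ bB (le_of_lt (pow_pos hlampos _))
      (mul_nonneg (Finset.prod_nonneg (fun i _ => by linarith [(hp i).2])) (hfnn _))
    apply mul_le_mul bA bS
      (mul_nonneg (le_of_lt (pow_pos hlampos _))
        (mul_nonneg (mul_nonneg (le_of_lt (pow_pos hlampos _)) hPAnn)
          (mul_nonneg (le_of_lt (pow_pos hlampos _)) hPBnn)))
      (Finset.prod_nonneg (fun i _ => by linarith [(hp i).2]))
  refine le_trans (le_of_eq ?_) bfinal
  have hcardS : (S \ U).card + U.card = S.card := Finset.card_sdiff_add_card_eq_card hUS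
  have hcardU : (Ap \ A).card + (Bp \ B).card = U.card := by
    rw [hU, Finset.card_union_of_disjoint hUdisj]
  have hcards : A.card + B.card + S.card = n := by
    have h1 : (A ∪ B).card = A.card + B.card := Finset.card_union_of_disjoint hABd
    have h2 : S.card = n - (A ∪ B).card := by
      rw [hS, Finset.card_compl, Fintype.card_fin]
    have h3 : (A ∪ B).card ≤ n := by
      simpa using Finset.card_le_univ (A ∪ B)
    omega
  have hpow : lam ^ n = lam ^ A.card * lam ^ (S \ U).card * lam ^ (Ap \ A).card
      * lam ^ (Bp \ B).card * lam ^ B.card := by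
    rw [← pow_add, ← pow_add, ← pow_add, ← pow_add]
    congr 1
    omega
  rw [hpow]
  ring

lemma oneProb_univ {t : ℕ} (a : ℝ) : oneProb t a Set.univ = 1 := by
  unfold oneProb
  simp only [Set.indicator_univ]
  exact sum_oneWt

lemma coinProb_empty {n t : ℕ} (p : Fin n → ℝ) : coinProb t p (∅ : Set (Fin t → Fin n → Bool)) = 0 := by
  simp [coinProb]

lemma coinProb_iUnion_le {n t : ℕ} {p : Fin n → ℝ} (hp : p ∈ cube n)
    {ι : Type*} [Fintype ι] (D : ι → Set (Fin t → Fin n → Bool)) :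
    coinProb t p (⋃ i, D i) ≤ ∑ i, coinProb t p (D i) := by
  classical
  unfold coinProb
  rw [Finset.sum_comm]
  apply Finset.sum_le_sum
  intro x _
  by_cases hx : x ∈ ⋃ i, D i
  · rw [Set.indicator_of_mem hx]
    obtain ⟨i, hi⟩ := Set.mem_iUnion.mp hx
    have : flipWeight p x = Set.indicator (D i) (flipWeight p) x := (Set.indicator_of_mem hi _).symm
    rw [this]
    exact Finset.single_le_sum (f := fun i => Set.indicator (D i) (flipWeight p) x)
      (fun j _ => Set.indicator_nonneg (fun z _ => flipWeight_nonneg hp z) x) (Finset.mem_univ i)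
  · rw [Set.indicator_of_notMem hx]
    exact Finset.sum_nonneg fun i _ =>
      Set.indicator_nonneg (fun z _ => flipWeight_nonneg hp z) x

/-- Probability of a single-coordinate event. -/
lemma coinProb_single_le {n t : ℕ} {p : Fin n → ℝ} (hp : p ∈ cube n) (i : Fin n)
    (T : Set (Fin t → Bool)) :
    coinProb t p {x | col x i ∈ T} ≤ oneProb t (p i) T := by
  classical
  have hev : {x : Fin t → Fin n → Bool | col x i ∈ T}
      = {x | ∀ j, col x j ∈ (if j = i then T else Set.univ)} := by
    ext x
    simp only [Set.mem_setOf_eq]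
    constructor
    · intro hx j
      by_cases hj : j = i
      · subst hj; simp [hx]
      · simp [hj]
    · intro hx
      have := hx i
      simpa using this
  rw [hev, coinProb_cone]
  have : ∏ j, oneProb t (p j) (if j = i then T else Set.univ)
      ≤ ∏ j ∈ {i}, oneProb t (p j) (if j = i then T else Set.univ) := by
    rw [← Finset.prod_sdiff (Finset.subset_univ {i})]
    have h1 : ∏ j ∈ Finset.univ \ {i}, oneProb t (p j) (if j = i then T else Set.univ) = 1 := by
      apply Finset.prod_eq_one
      intro j hj
      rw [Finset.mem_sdiff, Finset.mem_singleton] at hj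
      rw [if_neg hj.2, oneProb_univ]
    rw [h1, one_mul]
  refine le_trans this ?_
  rw [Finset.prod_singleton, if_pos rfl]

lemma cube_eq (n : ℕ) : cube n = Set.univ.pi (fun _ : Fin n => Set.Icc (0:ℝ) 1) := by
  ext p
  simp only [cube, Set.mem_setOf_eq, Set.mem_pi, Set.mem_univ, true_implies, Set.mem_Icc]

lemma cube_compact (n : ℕ) : IsCompact (cube n) := by
  rw [cube_eq]; exact isCompact_univ_pi (fun i => isCompact_Icc)

lemma unif {n : ℕ} (h : (Fin n → ℝ) → ℝ) (hc : ContinuousOn h (cube n)) (ε : ℝ) (hε : 0 < ε) :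
    ∃ δ > 0, ∀ p ∈ cube n, ∀ q ∈ cube n, dist q p < δ → |h q - h p| < ε := by
  have := (cube_compact n).uniformContinuousOn_of_continuous hc
  rw [Metric.uniformContinuousOn_iff] at this
  obtain ⟨δ, hδ, H⟩ := this ε hε
  exact ⟨δ, hδ, fun p hp q hq hd => by rw [← Real.dist_eq]; exact H q hq p hp hd⟩

set_option maxHeartbeats 2000000 in
lemma master {n : ℕ} (h : (Fin n → ℝ) → ℝ)
    (hrange : ∀ p ∈ cube n, h p ∈ Set.Icc (0 : ℝ) 1)
    (hcont : ContinuousOn h (cube n))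
    (hpb : PolyBounded h) :
    ∃ t₀ : ℕ, ∀ t, t₀ ≤ t → ∀ p ∈ cube n,
      coinProb t p {x | 1/2 ≤ h (empAvg t x)} ≤ 3 * h p := by
  classical
  obtain ⟨m, c, hc, Hpb⟩ := hpb
  obtain ⟨δ', hδ'pos, hmod⟩ := unif h hcont (1/7) (by norm_num)
  set δ := min (δ'/2) (1/8) with hδdef
  have hδ0 : 0 < δ := lt_min (by linarith) (by norm_num)
  have hδ8 : δ ≤ 1/8 := min_le_right _ _
  have hδδ' : δ < δ' := lt_of_le_of_lt (min_le_left _ _) (by linarith)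
  set N := Nat.ceil (1/δ) with hNdef
  have hδN : 1 ≤ δ * N := by
    have h1 := Nat.le_ceil (1/δ)
    calc (1:ℝ) = δ * (1/δ) := by field_simp
      _ ≤ δ * N := mul_le_mul_of_nonneg_left h1 (le_of_lt hδ0)
  set θ := min ((1/4:ℝ)^N) (1/8) with hθdef
  have hθ0 : 0 < θ := lt_min (by positivity) (by norm_num)
  have hθ8 : θ ≤ 1/8 := min_le_right _ _
  have hθN : θ ≤ (1/4:ℝ)^N := min_le_left _ _
  have hlam0 : 0 < θ * (1 - θ) := by nlinarith
  set c₀ := c * ((θ*(1-θ))^n)^m with hc₀def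
  have hc₀ : 0 < c₀ := mul_pos hc (pow_pos (pow_pos hlam0 n) m)
  set D := 3 * c₀ / 4^n with hDdef
  have hD : 0 < D := by positivity
  obtain ⟨t₁, ht₁⟩ : ∃ t₁ : ℕ, ((1:ℝ)/2)^t₁ < min 1 D / (4^(N*m)) :=
    exists_pow_lt_of_lt_one (by positivity) (by norm_num)
  obtain ⟨t₂, ht₂⟩ := exists_nat_gt ((n:ℝ)/(4*δ^2)/D)
  refine ⟨max (max t₁ t₂) (N*m+1), ?_⟩
  intro t ht p hp
  have hrange' := hrange p hp
  rw [Set.mem_Icc] at hrange'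
  by_cases hcase : 1/3 ≤ h p
  · have := coinProb_le_one hp {x | 1/2 ≤ h (empAvg t x)}
    linarith
  push_neg at hcase
  -- time parameters
  set k := Nat.floor (δ * t) + 1 with hkdef
  have htNm : N*m + 1 ≤ t := le_trans (le_max_right _ _) ht
  have ht1 : 1 ≤ t := by omega
  have htpos : (0:ℝ) < t := by exact_mod_cast Nat.lt_of_lt_of_le Nat.zero_lt_one ht1
  have hkm : m < k := by
    have h1 : (m:ℝ) ≤ δ * t := by
      have h2 : ((N*m : ℕ):ℝ) ≤ (t:ℝ) := by exact_mod_cast le_trans (Nat.le_succ _) htNm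
      push_cast at h2
      calc (m:ℝ) = 1 * m := (one_mul _).symm
        _ ≤ (δ*N) * m := mul_le_mul_of_nonneg_right hδN (Nat.cast_nonneg m)
        _ = δ * (N*m) := by ring
        _ ≤ δ * t := mul_le_mul_of_nonneg_left h2 (le_of_lt hδ0)
    have := Nat.le_floor h1
    omega
  set μ := (2:ℝ)^t * θ^(k-m) with hμdef
  have hμ0 : 0 ≤ μ := by positivity
  have hμbound : μ ≤ min 1 D := by
    have hNk : t ≤ N * k := by
      have hkr : δ * t ≤ (k:ℝ) := by
        have h5 := Nat.lt_floor_add_one (δ * t)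
        have h6 : (k:ℝ) = (⌊δ * (t:ℝ)⌋₊ : ℝ) + 1 := by rw [hkdef]; push_cast; ring
        rw [h6]
        linarith
      have hcast : (t:ℝ) ≤ (N:ℝ) * (k:ℝ) := by
        calc (t:ℝ) = 1 * t := (one_mul _).symm
          _ ≤ (δ*N) * t := mul_le_mul_of_nonneg_right hδN (le_of_lt htpos)
          _ = N * (δ*t) := by ring
          _ ≤ N * k := mul_le_mul_of_nonneg_left hkr (Nat.cast_nonneg N)
      exact_mod_cast hcast
    have hsub : t - N*m ≤ N * (k - m) := by
      have hd : N * k = N * m + N * (k - m) := by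
        rw [← Nat.mul_add]
        congr 1
        omega
      omega
    have s1 : θ^(k-m) ≤ ((1/4:ℝ)^N)^(k-m) := pow_le_pow_left₀ (le_of_lt hθ0) hθN _
    have s2 : ((1/4:ℝ)^N)^(k-m) = (1/4:ℝ)^(N*(k-m)) := by rw [← pow_mul]
    have s3 : (1/4:ℝ)^(N*(k-m)) ≤ (1/4:ℝ)^(t - N*m) :=
      pow_le_pow_of_le_one (by norm_num) (by norm_num) hsub
    have s4 : (2:ℝ)^t * (1/4:ℝ)^(t - N*m) = 4^(N*m) * (1/2:ℝ)^t := by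
      have ht' : N*m ≤ t := by omega
      have e1 : (1/4:ℝ)^(t - N*m) * (1/4:ℝ)^(N*m) = (1/4:ℝ)^t := by
        rw [← pow_add]; congr 1; omega
      have e2 : ((1/4:ℝ))^(N*m) * 4^(N*m) = 1 := by
        rw [← mul_pow]; norm_num
      have e3 : (2:ℝ)^t * (1/4:ℝ)^t = (1/2:ℝ)^t := by
        rw [← mul_pow]; norm_num
      calc (2:ℝ)^t * (1/4:ℝ)^(t - N*m)
          = (2:ℝ)^t * (1/4:ℝ)^(t - N*m) * ((1/4:ℝ)^(N*m) * 4^(N*m)) := by rw [e2, mul_one]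
        _ = (2:ℝ)^t * ((1/4:ℝ)^(t - N*m) * (1/4:ℝ)^(N*m)) * 4^(N*m) := by ring
        _ = (2:ℝ)^t * (1/4:ℝ)^t * 4^(N*m) := by rw [e1]
        _ = 4^(N*m) * (1/2:ℝ)^t := by rw [e3]; ring
    have s5 : ((1:ℝ)/2)^t ≤ ((1:ℝ)/2)^t₁ :=
      pow_le_pow_of_le_one (by norm_num) (by norm_num) (le_trans (le_max_left _ _) (le_trans (le_max_left _ _) ht))
    have s6 : (4:ℝ)^(N*m) * ((1:ℝ)/2)^t₁ ≤ min 1 D := by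
      rw [← le_div_iff₀' (by positivity)]
      exact le_of_lt ht₁
    calc μ = (2:ℝ)^t * θ^(k-m) := hμdef
      _ ≤ (2:ℝ)^t * (1/4:ℝ)^(t - N*m) := by
          apply mul_le_mul_of_nonneg_left _ (by positivity)
          exact le_trans s1 (le_of_eq s2 |>.trans s3)
      _ = 4^(N*m) * (1/2:ℝ)^t := s4
      _ ≤ 4^(N*m) * ((1:ℝ)/2)^t₁ := mul_le_mul_of_nonneg_left s5 (by positivity)
      _ ≤ min 1 D := s6
  have hμ1 : μ ≤ 1 := le_trans hμbound (min_le_left _ _)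
  have hμD : μ ≤ D := le_trans hμbound (min_le_right _ _)
  have hcheb : (n:ℝ)/(4*t*δ^2) ≤ D := by
    have htt₂ : (t₂:ℝ) ≤ t := by
      exact_mod_cast le_trans (le_max_right t₁ t₂) (le_trans (le_max_left _ _) ht)
    have h1 : (n:ℝ)/(4*δ^2) < D * t := by
      rw [div_lt_iff₀ hD] at ht₂
      calc (n:ℝ)/(4*δ^2) < t₂ * D := ht₂
        _ ≤ t * D := mul_le_mul_of_nonneg_right htt₂ (le_of_lt hD)
        _ = D * t := mul_comm _ _
    rw [div_le_iff₀ (by positivity)]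
    rw [div_lt_iff₀ (by positivity)] at h1
    nlinarith
  -- coordinate classes
  set Ap := Finset.univ.filter (fun i => p i ≤ θ) with hApdef
  set Bp := Finset.univ.filter (fun i => 1 - θ ≤ p i) with hBpdef
  have hAp : ∀ i, i ∈ Ap ↔ p i ≤ θ := fun i => by rw [hApdef]; simp
  have hBp : ∀ i, i ∈ Bp ↔ 1 - θ ≤ p i := fun i => by rw [hBpdef]; simp
  have hApBp : Disjoint Ap Bp := by
    rw [Finset.disjoint_left]
    intro i hiA hiB
    rw [hAp] at hiA; rw [hBp] at hiB
    linarith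
  set ev := {x : Fin t → Fin n → Bool | 1/2 ≤ h (empAvg t x)} with hevdef
  set G := fun (A B : Finset (Fin n)) => {x : Fin t → Fin n → Bool |
      (∀ i ∈ Ap, (i ∈ A ↔ empAvg t x i ≤ δ)) ∧
      (∀ i ∈ Bp, (i ∈ B ↔ 1 - δ ≤ empAvg t x i))} with hGdef
  -- step 1 : partition
  have step1 : coinProb t p ev ≤
      ∑ A ∈ Ap.powerset, ∑ B ∈ Bp.powerset, coinProb t p (ev ∩ G A B) := by
    have swap : ∑ A ∈ Ap.powerset, ∑ B ∈ Bp.powerset, coinProb t p (ev ∩ G A B)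
        = ∑ x : Fin t → Fin n → Bool, ∑ A ∈ Ap.powerset, ∑ B ∈ Bp.powerset,
            Set.indicator (ev ∩ G A B) (flipWeight p) x := by
      have e1 : ∀ A : Finset (Fin n), (∑ B ∈ Bp.powerset, ∑ x : Fin t → Fin n → Bool,
          Set.indicator (ev ∩ G A B) (flipWeight p) x)
          = ∑ x : Fin t → Fin n → Bool, ∑ B ∈ Bp.powerset,
              Set.indicator (ev ∩ G A B) (flipWeight p) x := fun A => Finset.sum_comm
      simp only [coinProb, e1]
      exact Finset.sum_comm
    rw [swap, coinProb]
    apply Finset.sum_le_sum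
    intro x _
    by_cases hx : x ∈ ev
    · set A₀ := Ap.filter (fun i => empAvg t x i ≤ δ) with hA₀def
      set B₀ := Bp.filter (fun i => 1 - δ ≤ empAvg t x i) with hB₀def
      have hA₀ : A₀ ∈ Ap.powerset := Finset.mem_powerset.mpr (Finset.filter_subset _ _)
      have hB₀ : B₀ ∈ Bp.powerset := Finset.mem_powerset.mpr (Finset.filter_subset _ _)
      have hxG : x ∈ ev ∩ G A₀ B₀ := by
        refine ⟨hx, ⟨fun i hi => ?_, fun i hi => ?_⟩⟩
        · rw [hA₀def, Finset.mem_filter]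
          simp [hi]
        · rw [hB₀def, Finset.mem_filter]
          simp [hi]
      have nonneg : ∀ (A B : Finset (Fin n)),
          0 ≤ Set.indicator (ev ∩ G A B) (flipWeight p) x :=
        fun A B => Set.indicator_nonneg (fun z _ => flipWeight_nonneg hp z) x
      calc Set.indicator ev (flipWeight p) x = flipWeight p x := Set.indicator_of_mem hx _
        _ = Set.indicator (ev ∩ G A₀ B₀) (flipWeight p) x := (Set.indicator_of_mem hxG _).symm
        _ ≤ ∑ B ∈ Bp.powerset, Set.indicator (ev ∩ G A₀ B) (flipWeight p) x :=
            Finset.single_le_sum (fun B _ => nonneg A₀ B) hB₀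
        _ ≤ ∑ A ∈ Ap.powerset, ∑ B ∈ Bp.powerset,
              Set.indicator (ev ∩ G A B) (flipWeight p) x :=
            Finset.single_le_sum
              (f := fun A => ∑ B ∈ Bp.powerset, Set.indicator (ev ∩ G A B) (flipWeight p) x)
              (fun A _ => Finset.sum_nonneg (fun B _ => nonneg A B)) hA₀
    · rw [Set.indicator_of_notMem hx]
      apply Finset.sum_nonneg
      intro A _
      exact Finset.sum_nonneg (fun B _ =>
        Set.indicator_nonneg (fun z _ => flipWeight_nonneg hp z) x)
  -- step 2 : each term
  have step2 : ∀ A ∈ Ap.powerset, ∀ B ∈ Bp.powerset,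
      coinProb t p (ev ∩ G A B) ≤ 3/4^n * h p := by
    intro A hA B hB
    rw [Finset.mem_powerset] at hA hB
    have hABdisj : Disjoint A B :=
      Finset.disjoint_of_subset_left hA (Finset.disjoint_of_subset_right hB hApBp)
    by_cases hvan : ∀ q ∈ face A B, h q = 0
    · have hempty : ev ∩ G A B = ∅ := by
        rw [Set.eq_empty_iff_forall_notMem]
        rintro x ⟨hxe, hxG⟩
        have hlt := vanish_near_face h hABdisj hvan hδ0 hδ8 hδδ' hmod (empAvg_mem_cube x)
          (fun i hi => (hxG.1 i (hA hi)).mp hi)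
          (fun i hi => (hxG.2 i (hB hi)).mp hi)
        have : (1:ℝ)/2 ≤ h (empAvg t x) := hxe
        linarith
      rw [hempty, coinProb_empty]
      have : (0:ℝ) ≤ 3/4^n * h p := by
        apply mul_nonneg (by positivity) hrange'.1
      linarith
    · set PA := ∏ i ∈ Ap \ A, p i with hPAdef
      set PB := ∏ i ∈ Bp \ B, (1 - p i) with hPBdef
      have hPAnn : 0 ≤ PA := Finset.prod_nonneg (fun i _ => (hp i).1)
      have hPBnn : 0 ≤ PB := Finset.prod_nonneg (fun i _ => by linarith [(hp i).2])
      have hlb : c₀ * (PA * PB)^m ≤ h p := by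
        have h1 := Hpb A B hABdisj hvan p hp
        have h2 := facePoly_lower hp hθ0 hθ8 hAp hBp hA hB
        have h3 : ((θ*(1-θ))^n * (PA * PB))^m ≤ facePoly A B p ^ m := by
          apply pow_le_pow_left₀ _ h2 m
          apply mul_nonneg (by positivity) (mul_nonneg hPAnn hPBnn)
        have h4 : ((θ*(1-θ))^n)^m * (PA*PB)^m = ((θ*(1-θ))^n * (PA*PB))^m :=
          (mul_pow _ _ m).symm
        calc c₀ * (PA*PB)^m = c * (((θ*(1-θ))^n)^m * (PA*PB)^m) := by
              rw [hc₀def, mul_assoc]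
          _ = c * (((θ*(1-θ))^n * (PA*PB))^m) := by rw [h4]
          _ ≤ c * facePoly A B p ^ m := mul_le_mul_of_nonneg_left h3 (le_of_lt hc)
          _ ≤ h p := h1
      by_cases hfull : A = Ap ∧ B = Bp
      · -- Chebyshev case
        obtain ⟨hAe, hBe⟩ := hfull
        have hPA1 : PA = 1 := by
          rw [hPAdef, hAe, Finset.sdiff_self, Finset.prod_empty]
        have hPB1 : PB = 1 := by
          rw [hPBdef, hBe, Finset.sdiff_self, Finset.prod_empty]
        have hlb' : c₀ ≤ h p := by
          rw [hPA1, hPB1] at hlb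
          simpa using hlb
        have ht1' : 0 < t := ht1
        have hsub : ev ∩ G A B ⊆ ⋃ i, {x : Fin t → Fin n → Bool |
            col x i ∈ {y : Fin t → Bool | δ ≤ |cnt y / t - p i|}} := by
          rintro x ⟨hxe, -⟩
          by_contra hcon
          rw [Set.mem_iUnion] at hcon
          push_neg at hcon
          have hdist : dist (empAvg t x) p < δ' := by
            have hle : dist (empAvg t x) p ≤ δ := by
              rw [dist_pi_le_iff (le_of_lt hδ0)]
              intro i
              rw [Real.dist_eq, empAvg_eq]
              exact le_of_lt (not_le.mp (hcon i))
            linarith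
          have hcl := hmod p hp (empAvg t x) (empAvg_mem_cube x) hdist
          have hxevv : (1:ℝ)/2 ≤ h (empAvg t x) := hxe
          rw [abs_lt] at hcl
          linarith [hcl.2]
        calc coinProb t p (ev ∩ G A B)
            ≤ coinProb t p (⋃ i, {x : Fin t → Fin n → Bool |
                col x i ∈ {y : Fin t → Bool | δ ≤ |cnt y / t - p i|}}) :=
              coinProb_mono hp hsub
          _ ≤ ∑ i, coinProb t p {x : Fin t → Fin n → Bool |
                col x i ∈ {y : Fin t → Bool | δ ≤ |cnt y / t - p i|}} :=
              coinProb_iUnion_le hp _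
          _ ≤ ∑ i : Fin n, (1/4) / (t * δ^2) := by
              apply Finset.sum_le_sum
              intro i _
              refine le_trans (coinProb_single_le hp i _) ?_
              refine le_trans (oneProb_cheb (hp i).1 (hp i).2 hδ0 ht1') ?_
              have hnum : p i * (1 - p i) ≤ 1/4 := by nlinarith [sq_nonneg (p i - 1/2)]
              gcongr
          _ = n / (4 * t * δ^2) := by
              rw [Finset.sum_const, Finset.card_univ, Fintype.card_fin, nsmul_eq_mul]
              ring
          _ ≤ D := hcheb
          _ ≤ 3/4^n * h p := by
              rw [hDdef]
              calc 3*c₀/4^n = 3/4^n * c₀ := by ring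
                _ ≤ 3/4^n * h p := mul_le_mul_of_nonneg_left hlb' (by positivity)
      ·
        have hUdisj : Disjoint (Ap \ A) (Bp \ B) :=
          Finset.disjoint_of_subset_left Finset.sdiff_subset
            (Finset.disjoint_of_subset_right Finset.sdiff_subset hApBp)
        set U := (Ap \ A) ∪ (Bp \ B) with hUdef
        have hUne : U.Nonempty := by
          rcases not_and_or.mp hfull with hne | hne
          · obtain ⟨i, hi1, hi2⟩ := Finset.exists_of_ssubset (lt_of_le_of_ne hA hne)
            refine ⟨i, ?_⟩
            rw [hUdef]
            simp only [Finset.mem_union, Finset.mem_sdiff]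
            exact Or.inl ⟨hi1, hi2⟩
          · obtain ⟨i, hi1, hi2⟩ := Finset.exists_of_ssubset (lt_of_le_of_ne hB hne)
            refine ⟨i, ?_⟩
            rw [hUdef]
            simp only [Finset.mem_union, Finset.mem_sdiff]
            exact Or.inr ⟨hi1, hi2⟩
        set T := fun j => if j ∈ Ap \ A then {y : Fin t → Bool | δ < cnt y / t}
            else if j ∈ Bp \ B then {y : Fin t → Bool | cnt y / t < 1 - δ}
            else (Set.univ : Set (Fin t → Bool)) with hTdef
        have hsub : ev ∩ G A B ⊆ {x | ∀ j, col x j ∈ T j} := by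
          rintro x ⟨hxe, hxG⟩
          intro j
          rw [hTdef]
          dsimp only
          split_ifs with h1 h2
          · rw [Finset.mem_sdiff] at h1
            have hiff := hxG.1 j h1.1
            have hnot : ¬ empAvg t x j ≤ δ := fun hcc => h1.2 (hiff.mpr hcc)
            have hlt : δ < empAvg t x j := not_le.mp hnot
            rw [empAvg_eq] at hlt
            exact hlt
          · rw [Finset.mem_sdiff] at h2
            have hiff := hxG.2 j h2.1
            have hnot : ¬ 1 - δ ≤ empAvg t x j := fun hcc => h2.2 (hiff.mpr hcc)
            have hlt : empAvg t x j < 1 - δ := not_le.mp hnot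
            rw [empAvg_eq] at hlt
            exact hlt
          · trivial
        have hbA : ∀ j ∈ Ap \ A, oneProb t (p j) (T j) ≤ μ * (p j)^m := by
          intro j hj
          have hTj : T j = {y : Fin t → Bool | δ < cnt y / t} := by
            rw [hTdef]; dsimp only; rw [if_pos hj]
          rw [hTj]
          have hmono : {y : Fin t → Bool | δ < cnt y / t}
              ⊆ {y : Fin t → Bool | (k:ℝ) ≤ cnt y} := by
            intro y hy
            simp only [Set.mem_setOf_eq] at hy ⊢
            have h7 : δ * t < cnt y := (lt_div_iff₀ htpos).mp hy
            rw [cnt_eq_card] at h7 ⊢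
            have h9 : ⌊δ * (t:ℝ)⌋₊ < (Finset.univ.filter (fun s => y s = true)).card := by
              have h10 := Nat.floor_le (by positivity : (0:ℝ) ≤ δ * t)
              exact_mod_cast lt_of_le_of_lt h10 h7
            have h11 : k ≤ (Finset.univ.filter (fun s => y s = true)).card := by
              rw [hkdef]; omega
            exact_mod_cast h11
          refine le_trans (oneProb_mono (hp j).1 (hp j).2 hmono) ?_
          refine le_trans (oneProb_tail_low (hp j).1 (hp j).2 k) ?_
          have hpj : p j ≤ θ := (hAp j).mp (Finset.mem_sdiff.mp hj).1
          have e1 : (p j)^k = (p j)^m * (p j)^(k-m) := by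
            rw [← pow_add]; congr 1; omega
          have e2 : (p j)^(k-m) ≤ θ^(k-m) := pow_le_pow_left₀ (hp j).1 hpj _
          calc (2:ℝ)^t * (p j)^k = (2:ℝ)^t * ((p j)^(k-m) * (p j)^m) := by rw [e1]; ring
            _ ≤ (2:ℝ)^t * (θ^(k-m) * (p j)^m) := by
                apply mul_le_mul_of_nonneg_left _ (by positivity)
                exact mul_le_mul_of_nonneg_right e2 (pow_nonneg (hp j).1 m)
            _ = μ * (p j)^m := by rw [hμdef]; ring
        have hbB : ∀ j ∈ Bp \ B, oneProb t (p j) (T j) ≤ μ * (1 - p j)^m := by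
          intro j hj
          have hjA : j ∉ Ap \ A := Finset.disjoint_right.mp hUdisj hj
          have hTj : T j = {y : Fin t → Bool | cnt y / t < 1 - δ} := by
            rw [hTdef]; dsimp only; rw [if_neg hjA, if_pos hj]
          rw [hTj]
          have hmono : {y : Fin t → Bool | cnt y / t < 1 - δ}
              ⊆ {y : Fin t → Bool | (k:ℝ) ≤ t - cnt y} := by
            intro y hy
            simp only [Set.mem_setOf_eq] at hy ⊢
            have h7 : cnt y < (1 - δ) * t := (div_lt_iff₀ htpos).mp hy
            have h7' : δ * t < t - cnt y := by nlinarith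
            rw [cnt_eq_card] at h7' ⊢
            have hcardle : (Finset.univ.filter (fun s => y s = true)).card ≤ t := by
              calc (Finset.univ.filter (fun s => y s = true)).card
                  ≤ (Finset.univ : Finset (Fin t)).card := Finset.card_filter_le _ _
                _ = t := by simp
            have hcast : ((t - (Finset.univ.filter (fun s => y s = true)).card : ℕ) : ℝ)
                = (t:ℝ) - ((Finset.univ.filter (fun s => y s = true)).card : ℝ) := by
              push_cast [Nat.cast_sub hcardle]
              ring
            have h9 : ⌊δ * (t:ℝ)⌋₊ < t - (Finset.univ.filter (fun s => y s = true)).card := by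
              have h10 := Nat.floor_le (by positivity : (0:ℝ) ≤ δ * t)
              have := lt_of_le_of_lt h10 h7'
              rw [← hcast] at this
              exact_mod_cast this
            have h11 : k ≤ t - (Finset.univ.filter (fun s => y s = true)).card := by
              rw [hkdef]; omega
            have h12 : ((k:ℕ):ℝ) ≤ ((t - (Finset.univ.filter (fun s => y s = true)).card : ℕ):ℝ) := by
              exact_mod_cast h11
            rw [hcast] at h12
            exact h12
          refine le_trans (oneProb_mono (hp j).1 (hp j).2 hmono) ?_
          refine le_trans (oneProb_tail_high (hp j).1 (hp j).2 k) ?_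
          have hpj : 1 - p j ≤ θ := by
            have := (hBp j).mp (Finset.mem_sdiff.mp hj).1
            linarith
          have hpj0 : 0 ≤ 1 - p j := by linarith [(hp j).2]
          have e1 : (1 - p j)^k = (1 - p j)^m * (1 - p j)^(k-m) := by
            rw [← pow_add]; congr 1; omega
          have e2 : (1 - p j)^(k-m) ≤ θ^(k-m) := pow_le_pow_left₀ hpj0 hpj _
          calc (2:ℝ)^t * (1 - p j)^k = (2:ℝ)^t * ((1 - p j)^(k-m) * (1 - p j)^m) := by
                rw [e1]; ring
            _ ≤ (2:ℝ)^t * (θ^(k-m) * (1 - p j)^m) := by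
                apply mul_le_mul_of_nonneg_left _ (by positivity)
                exact mul_le_mul_of_nonneg_right e2 (pow_nonneg hpj0 m)
            _ = μ * (1 - p j)^m := by rw [hμdef]; ring
        have honn : ∀ (j : Fin n) (T' : Set (Fin t → Bool)), 0 ≤ oneProb t (p j) T' :=
          fun j T' => oneProb_nonneg (hp j).1 (hp j).2 T'
        have hcardU : (Ap \ A).card + (Bp \ B).card ≠ 0 := by
          have h13 : U.card = (Ap \ A).card + (Bp \ B).card := by
            rw [hUdef, Finset.card_union_of_disjoint hUdisj]
          have h14 := Finset.card_pos.mpr hUne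
          omega
        calc coinProb t p (ev ∩ G A B)
            ≤ coinProb t p {x | ∀ j, col x j ∈ T j} := coinProb_mono hp hsub
          _ = ∏ j, oneProb t (p j) (T j) := coinProb_cone p T
          _ = (∏ j ∈ Finset.univ \ U, oneProb t (p j) (T j)) * ∏ j ∈ U, oneProb t (p j) (T j) :=
              (Finset.prod_sdiff (Finset.subset_univ U)).symm
          _ = ∏ j ∈ U, oneProb t (p j) (T j) := by
              have h15 : ∏ j ∈ Finset.univ \ U, oneProb t (p j) (T j) = 1 := by
                apply Finset.prod_eq_one
                intro j hj
                rw [Finset.mem_sdiff] at hj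
                have hj2 := hj.2
                rw [hUdef, Finset.mem_union] at hj2
                push_neg at hj2
                have hTj : T j = Set.univ := by
                  rw [hTdef]; dsimp only; rw [if_neg hj2.1, if_neg hj2.2]
                rw [hTj, oneProb_univ]
              rw [h15, one_mul]
          _ = (∏ j ∈ Ap \ A, oneProb t (p j) (T j)) * ∏ j ∈ Bp \ B, oneProb t (p j) (T j) := by
              rw [hUdef, Finset.prod_union hUdisj]
          _ ≤ (∏ j ∈ Ap \ A, (μ * (p j)^m)) * ∏ j ∈ Bp \ B, (μ * (1 - p j)^m) := by
              apply mul_le_mul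
              · exact Finset.prod_le_prod (fun j _ => honn j _) hbA
              · exact Finset.prod_le_prod (fun j _ => honn j _) hbB
              · exact Finset.prod_nonneg (fun j _ => honn j _)
              · exact Finset.prod_nonneg (fun j _ =>
                  mul_nonneg hμ0 (pow_nonneg (hp j).1 m))
          _ = (μ^(Ap \ A).card * PA^m) * (μ^(Bp \ B).card * PB^m) := by
              have eA : ∏ j ∈ Ap \ A, (μ * (p j)^m) = μ^(Ap \ A).card * PA^m := by
                rw [Finset.prod_mul_distrib, Finset.prod_const, hPAdef, Finset.prod_pow]
              have eB : ∏ j ∈ Bp \ B, (μ * (1 - p j)^m) = μ^(Bp \ B).card * PB^m := by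
                rw [Finset.prod_mul_distrib, Finset.prod_const, hPBdef, Finset.prod_pow]
              rw [eA, eB]
          _ = μ^((Ap \ A).card + (Bp \ B).card) * (PA*PB)^m := by
              rw [pow_add, mul_pow]; ring
          _ ≤ μ * (PA*PB)^m := by
              apply mul_le_mul_of_nonneg_right _ (pow_nonneg (mul_nonneg hPAnn hPBnn) m)
              exact pow_le_of_le_one hμ0 hμ1 hcardU
          _ ≤ D * (PA*PB)^m :=
              mul_le_mul_of_nonneg_right hμD (pow_nonneg (mul_nonneg hPAnn hPBnn) m)
          _ = 3/4^n * (c₀ * (PA*PB)^m) := by rw [hDdef]; ring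
          _ ≤ 3/4^n * h p := mul_le_mul_of_nonneg_left hlb (by positivity)
  have h4n : (2:ℝ)^n * (2:ℝ)^n = 4^n := by rw [← mul_pow]; norm_num
  have hXnn : 0 ≤ 3/4^n * h p := mul_nonneg (by positivity) hrange'.1
  have hcA : ((Ap.powerset.card : ℕ) : ℝ) ≤ (2:ℝ)^n := by
    rw [Finset.card_powerset]
    have h16 : Ap.card ≤ n := by simpa using Finset.card_le_univ Ap
    calc ((2^Ap.card : ℕ):ℝ) = (2:ℝ)^Ap.card := by push_cast; ring
      _ ≤ (2:ℝ)^n := pow_le_pow_right₀ (by norm_num) h16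
  have hcB : ((Bp.powerset.card : ℕ) : ℝ) ≤ (2:ℝ)^n := by
    rw [Finset.card_powerset]
    have h16 : Bp.card ≤ n := by simpa using Finset.card_le_univ Bp
    calc ((2^Bp.card : ℕ):ℝ) = (2:ℝ)^Bp.card := by push_cast; ring
      _ ≤ (2:ℝ)^n := pow_le_pow_right₀ (by norm_num) h16
  calc coinProb t p ev
      ≤ ∑ A ∈ Ap.powerset, ∑ B ∈ Bp.powerset, coinProb t p (ev ∩ G A B) := step1
    _ ≤ ∑ A ∈ Ap.powerset, ∑ B ∈ Bp.powerset, (3/4^n * h p) :=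
        Finset.sum_le_sum (fun A hA => Finset.sum_le_sum (fun B hB => step2 A hA B hB))
    _ = ((Ap.powerset.card : ℕ):ℝ) * (((Bp.powerset.card : ℕ):ℝ) * (3/4^n * h p)) := by
        rw [Finset.sum_const, nsmul_eq_mul, Finset.sum_const, nsmul_eq_mul]
    _ ≤ (2:ℝ)^n * ((2:ℝ)^n * (3/4^n * h p)) := by
        apply mul_le_mul hcA
          (mul_le_mul hcB le_rfl hXnn (by positivity))
          (mul_nonneg (Nat.cast_nonneg _) hXnn) (by positivity)
    _ = 3 * h p := by
        rw [← mul_assoc, h4n]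
        field_simp

theorem stmt1 {n : ℕ} (f : (Fin n → ℝ) → ℝ)
    (hrange : ∀ p ∈ cube n, f p ∈ Set.Icc (0 : ℝ) 1)
    (hcont : ContinuousOn f (cube n))
    (hpb : PolyBounded f)
    (hpb' : PolyBounded (fun p => 1 - f p)) :
    ∃ t : ℕ, ∀ g ftilde : (Fin n → ℝ) → ℝ,
      (∀ p, g p = coinProb t p {x | 1 / 2 ≤ f (empAvg t x)}) →
      (∀ p, ftilde p = (4 / 3) * (f p - (1 / 4) * g p)) →
      (∀ p ∈ cube n, ftilde p ∈ Set.Icc (0 : ℝ) 1) ∧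
      ContinuousOn ftilde (cube n) ∧
      PolyBounded ftilde ∧
      PolyBounded (fun p => 1 - ftilde p) := by
  classical
  obtain ⟨t₀f, hf⟩ := master f hrange hcont hpb
  have hrange2 : ∀ p ∈ cube n, (fun p => 1 - f p) p ∈ Set.Icc (0:ℝ) 1 := by
    intro p hp
    have := hrange p hp
    rw [Set.mem_Icc] at this ⊢
    constructor
    · simpa using this.2
    · simp only
      linarith [this.1]
  have hcont2 : ContinuousOn (fun p => 1 - f p) (cube n) := continuousOn_const.sub hcont
  obtain ⟨t₀g, hg'⟩ := master (fun p => 1 - f p) hrange2 hcont2 hpb'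
  refine ⟨max t₀f t₀g, ?_⟩
  set t := max t₀f t₀g with htdef
  intro g ftilde hgdef hftdef
  have hfle : ∀ p ∈ cube n, g p ≤ 3 * f p := by
    intro p hp
    rw [hgdef p]
    exact hf t (le_max_left _ _) p hp
  have hgge : ∀ p ∈ cube n, 1 - g p ≤ 3 * (1 - f p) := by
    intro p hp
    have h1 : 1 - g p = coinProb t p {x | 1/2 ≤ f (empAvg t x)}ᶜ := by
      rw [hgdef p]
      exact (coinProb_compl hp _).symm
    have hsub : {x : Fin t → Fin n → Bool | 1/2 ≤ f (empAvg t x)}ᶜ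
        ⊆ {x | 1/2 ≤ (fun q => 1 - f q) (empAvg t x)} := by
      intro x hx
      simp only [Set.mem_compl_iff, Set.mem_setOf_eq, not_le] at hx ⊢
      linarith
    calc 1 - g p = coinProb t p {x | 1/2 ≤ f (empAvg t x)}ᶜ := h1
      _ ≤ coinProb t p {x | 1/2 ≤ (fun q => 1 - f q) (empAvg t x)} := coinProb_mono hp hsub
      _ ≤ 3 * (1 - f p) := hg' t (le_max_right _ _) p hp
  have hg0 : ∀ p ∈ cube n, 0 ≤ g p := by
    intro p hp
    rw [hgdef p]
    exact coinProb_nonneg hp _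
  have hg1le : ∀ p ∈ cube n, g p ≤ 1 := by
    intro p hp
    rw [hgdef p]
    exact coinProb_le_one hp _
  have hfb : ∀ p ∈ cube n, f p / 3 ≤ ftilde p ∧ ftilde p ≤ 1 - (1 - f p)/3 := by
    intro p hp
    rw [hftdef p]
    constructor
    · have := hfle p hp; linarith
    · have := hgge p hp; linarith
  refine ⟨?_, ?_, ?_, ?_⟩
  · intro p hp
    have h1 := hfb p hp
    have h2 := hrange p hp
    rw [Set.mem_Icc] at h2 ⊢
    constructor
    · calc (0:ℝ) ≤ f p / 3 := by linarith [h2.1]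
        _ ≤ ftilde p := h1.1
    · calc ftilde p ≤ 1 - (1 - f p)/3 := h1.2
        _ ≤ 1 := by linarith [h2.2]
  · have hfeq : ftilde = fun p => (4/3) * (f p - (1/4) *
        coinProb t p {x | 1/2 ≤ f (empAvg t x)}) := by
      funext p
      rw [hftdef p, hgdef p]
    rw [hfeq]
    apply ContinuousOn.mul continuousOn_const
    apply ContinuousOn.sub hcont
    apply ContinuousOn.mul continuousOn_const
    exact (coinProb_continuous _).continuousOn
  · obtain ⟨m, c, hc, H⟩ := hpb
    refine ⟨m, c/3, by positivity, ?_⟩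
    intro A B hAB hnz p hp
    have hnzf : ¬ ∀ q ∈ face A B, f q = 0 := by
      intro hzf
      apply hnz
      intro q hq
      have hqc := face_subset_cube A B hq
      have h1 := hfle q hqc
      have h2 := hg0 q hqc
      rw [hftdef q, hzf q hq]
      rw [hzf q hq] at h1
      have hgq : g q = 0 := le_antisymm (by linarith) h2
      rw [hgq]
      ring
    calc c/3 * facePoly A B p ^ m = (c * facePoly A B p ^ m)/3 := by ring
      _ ≤ f p / 3 := by linarith [H A B hAB hnzf p hp]
      _ ≤ ftilde p := (hfb p hp).1
  · obtain ⟨m, c, hc, H⟩ := hpb'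
    refine ⟨m, c/3, by positivity, ?_⟩
    intro A B hAB hnz p hp
    have hnzf : ¬ ∀ q ∈ face A B, (fun p => 1 - f p) q = 0 := by
      intro hzf
      apply hnz
      intro q hq
      have hqc := face_subset_cube A B hq
      have h1 := hgge q hqc
      have h2 := hg1le q hqc
      have h3 : f q = 1 := by
        have := hzf q hq
        simp only at this
        linarith
      have h4 : g q = 1 := by
        rw [h3] at h1
        have : 1 - g q ≤ 0 := by linarith
        linarith
      simp only
      rw [hftdef q, h4, h3]
      norm_num
    have hHp := H A B hAB hnzf p hp
    simp only at hHp ⊢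
    calc c/3 * facePoly A B p ^ m ≤ (1 - f p)/3 := by linarith
      _ ≤ 1 - ftilde p := by linarith [(hfb p hp).2]
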